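/- In two variables, let G_k = grad(P_{k+1}) ⊆ (P_k)^2 and let G_k^⊥ be the orthogonal complement of G_k in (P_k)^2 with respect to the L^2(E) inner product on a polygon E. Then the scalar rot operator restricted to G_k^⊥ is a linear isomorphism onto P_{k-1}; in particular dim G_k^⊥ = dim P_{k-1} = k(k+1)/2. -/

import Mathlib

open MvPolynomial MeasureTheory

/-- `degLE n p` means `p ∈ P_n`, with the convention `P_n = {0}` for `n < 0`. -/
def degLE (n : ℤ) (p : MvPolynomial (Fin 2) ℝ) : Prop :=
  if 0 ≤ n then p.totalDegree ≤ n.toNat else p = 0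

/-- The `L²(E)` inner product against a fixed polynomial vector field `g`,
as a linear functional `v ↦ ∫_E v · g`. -/
noncomputable def ipL (E : Set (Fin 2 → ℝ)) (hEb : Bornology.IsBounded E)
    (g : Fin 2 → MvPolynomial (Fin 2) ℝ) :
    (Fin 2 → MvPolynomial (Fin 2) ℝ) →ₗ[ℝ] ℝ where
  toFun v := ∫ x in E, ∑ i, eval x (v i) * eval x (g i)
  map_add' v w := by
    have h : ∀ u : Fin 2 → MvPolynomial (Fin 2) ℝ,
        IntegrableOn (fun x => ∑ i, eval x (u i) * eval x (g i)) E volume := by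
      intro u
      have hc : Continuous fun x : Fin 2 → ℝ => ∑ i, eval x (u i) * eval x (g i) :=
        continuous_finset_sum _ fun i _ =>
          (MvPolynomial.continuous_eval (u i)).mul (MvPolynomial.continuous_eval (g i))
      exact ((hc.continuousOn).integrableOn_compact hEb.isCompact_closure).mono_set
        subset_closure
    have heq : (fun x => ∑ i, eval x ((v + w) i) * eval x (g i)) =
        fun x => (∑ i, eval x (v i) * eval x (g i)) + ∑ i, eval x (w i) * eval x (g i) := by
      funext x
      simp [add_mul, Finset.sum_add_distrib]
    show (∫ x in E, ∑ i, eval x ((v + w) i) * eval x (g i)) = _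
    rw [heq]
    exact integral_add (h v) (h w)
  map_smul' c v := by
    have heq : (fun x => ∑ i, eval x ((c • v) i) * eval x (g i)) =
        fun x => c • ∑ i, eval x (v i) * eval x (g i) := by
      funext x
      simp [MvPolynomial.smul_eval, mul_assoc]
      ring
    show (∫ x in E, ∑ i, eval x ((c • v) i) * eval x (g i)) = _
    rw [heq, integral_smul]
    rfl

/-- `(P_k)²`, the vector polynomials of degree at most `k` in two variables. -/
noncomputable def Pvec (k : ℕ) : Submodule ℝ (Fin 2 → MvPolynomial (Fin 2) ℝ) :=
  Submodule.pi Set.univ fun _ => MvPolynomial.restrictTotalDegree (Fin 2) ℝ k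

/-- `G_k^⊥`: the `L²(E)`-orthogonal complement of `G_k = grad (P_{k+1})` inside `(P_k)²`. -/
noncomputable def Gperp (E : Set (Fin 2 → ℝ)) (hEb : Bornology.IsBounded E) (k : ℕ) :
    Submodule ℝ (Fin 2 → MvPolynomial (Fin 2) ℝ) :=
  Pvec k ⊓ ⨅ p ∈ {p : MvPolynomial (Fin 2) ℝ | p.totalDegree ≤ k + 1},
    LinearMap.ker (ipL E hEb fun i => pderiv i p)

/-- The scalar rot `rot (v₁, v₂) = ∂v₂/∂x − ∂v₁/∂y`, as a linear map. -/
noncomputable def rotLM :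
    (Fin 2 → MvPolynomial (Fin 2) ℝ) →ₗ[ℝ] MvPolynomial (Fin 2) ℝ :=
  LinearMap.comp (pderiv (0 : Fin 2)).toLinearMap
      (LinearMap.proj (φ := fun _ : Fin 2 => MvPolynomial (Fin 2) ℝ) (R := ℝ) 1) -
    LinearMap.comp (pderiv (1 : Fin 2)).toLinearMap
      (LinearMap.proj (φ := fun _ : Fin 2 => MvPolynomial (Fin 2) ℝ) (R := ℝ) 0)

namespace RotAux

-- Vanishing of polynomials on open sets

lemma eq_zero_of_eqOn_open {U : Set (Fin 2 → ℝ)} (hU : IsOpen U) (hne : U.Nonempty)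
    {p : MvPolynomial (Fin 2) ℝ} (hp : ∀ x ∈ U, eval x p = 0) : p = 0 := by
  obtain ⟨x₀, hx₀⟩ := hne
  have han : AnalyticOnNhd ℝ (fun x : Fin 2 → ℝ => eval x p) Set.univ := by
    simpa using AnalyticOnNhd.eval_continuousLinearMap
      (ContinuousLinearMap.id ℝ (Fin 2 → ℝ)) p
  have hev : (fun x : Fin 2 → ℝ => eval x p) =ᶠ[nhds x₀] 0 :=
    Filter.eventuallyEq_of_mem (hU.mem_nhds hx₀) hp
  have hzero := han.eqOn_zero_of_preconnected_of_eventuallyEq_zero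
    (convex_univ : Convex ℝ (Set.univ : Set (Fin 2 → ℝ))).isPreconnected
    (Set.mem_univ x₀) hev
  apply MvPolynomial.funext (q := 0)
  intro x
  simpa using hzero (Set.mem_univ x)

/-! ### ipL facts -/


lemma contSum (v g : Fin 2 → MvPolynomial (Fin 2) ℝ) :
    Continuous fun x : Fin 2 → ℝ => ∑ i, eval x (v i) * eval x (g i) :=
  continuous_finset_sum _ fun i _ =>
    (MvPolynomial.continuous_eval (v i)).mul (MvPolynomial.continuous_eval (g i))

lemma intOn {E : Set (Fin 2 → ℝ)} (hEb : Bornology.IsBounded E)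
    (v g : Fin 2 → MvPolynomial (Fin 2) ℝ) :
    IntegrableOn (fun x => ∑ i, eval x (v i) * eval x (g i)) E volume :=
  (((contSum v g).continuousOn).integrableOn_compact hEb.isCompact_closure).mono_set
    subset_closure

lemma ipL_apply (E : Set (Fin 2 → ℝ)) (hEb : Bornology.IsBounded E)
    (g v : Fin 2 → MvPolynomial (Fin 2) ℝ) :
    ipL E hEb g v = ∫ x in E, ∑ i, eval x (v i) * eval x (g i) := rfl

lemma ipL_comm (E : Set (Fin 2 → ℝ)) (hEb : Bornology.IsBounded E)
    (g v : Fin 2 → MvPolynomial (Fin 2) ℝ) :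
    ipL E hEb g v = ipL E hEb v g := by
  simp only [ipL_apply]
  congr 1
  funext x
  exact Finset.sum_congr rfl fun i _ => mul_comm _ _

lemma ipL_self_nonneg {E : Set (Fin 2 → ℝ)} (hEm : MeasurableSet E)
    (hEb : Bornology.IsBounded E) (v : Fin 2 → MvPolynomial (Fin 2) ℝ) :
    0 ≤ ipL E hEb v v := by
  rw [ipL_apply]
  refine setIntegral_nonneg hEm fun x _ => ?_
  exact Finset.sum_nonneg fun i _ => mul_self_nonneg _

lemma ipL_self_eq_zero {E : Set (Fin 2 → ℝ)} (hEm : MeasurableSet E)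
    (hEb : Bornology.IsBounded E) (hEi : (interior E).Nonempty)
    {v : Fin 2 → MvPolynomial (Fin 2) ℝ} (h : ipL E hEb v v = 0) : v = 0 := by
  set f := fun x : Fin 2 → ℝ => ∑ i, eval x (v i) * eval x (v i) with hf
  have hnn : ∀ x, 0 ≤ f x := fun x => Finset.sum_nonneg fun i _ => mul_self_nonneg _
  have hint : Integrable f (volume.restrict E) := intOn hEb v v
  have hae : f =ᵐ[volume.restrict E] 0 :=
    (integral_eq_zero_iff_of_nonneg hnn hint).mp h
  have hae' : ∀ᵐ x ∂(volume : Measure (Fin 2 → ℝ)), x ∈ E → f x = 0 :=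
    (ae_restrict_iff' hEm).mp hae
  have hz : ∀ x ∈ interior E, f x = 0 := by
    by_contra hcon
    push_neg at hcon
    obtain ⟨x₀, hx₀U, hx₀⟩ := hcon
    set U := interior E ∩ f ⁻¹' {(0 : ℝ)}ᶜ with hU
    have hUo : IsOpen U :=
      isOpen_interior.inter (IsOpen.preimage (contSum v v) isOpen_compl_singleton)
    have hUne : U.Nonempty := ⟨x₀, hx₀U, by simpa using hx₀⟩
    have hU0 : volume U = 0 := by
      refine measure_mono_null ?_ (ae_iff.mp hae')
      intro x hx
      simp only [Set.mem_setOf_eq, Classical.not_imp]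
      exact ⟨interior_subset hx.1, by simpa using hx.2⟩
    exact (hUo.measure_pos volume hUne).ne' hU0
  have hzi : ∀ i, ∀ x ∈ interior E, eval x (v i) = 0 := by
    intro i x hx
    have h0 := hz x hx
    have := (Finset.sum_eq_zero_iff_of_nonneg
      (fun j _ => mul_self_nonneg (eval x (v j)))).mp h0 i (Finset.mem_univ i)
    exact mul_self_eq_zero.mp this
  funext i
  exact eq_zero_of_eqOn_open isOpen_interior hEi (hzi i)




noncomputable def antid (i : Fin 2) :
    MvPolynomial (Fin 2) ℝ →ₗ[ℝ] MvPolynomial (Fin 2) ℝ :=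
  (basisMonomials (Fin 2) ℝ).constr ℝ fun d =>
    (((d i : ℝ) + 1)⁻¹) • monomial (d + Finsupp.single i 1) (1 : ℝ)

lemma antid_monomial (i : Fin 2) (d : Fin 2 →₀ ℕ) :
    antid i (monomial d (1 : ℝ)) = (((d i : ℝ) + 1)⁻¹) • monomial (d + Finsupp.single i 1) (1 : ℝ) := by
  have := (basisMonomials (Fin 2) ℝ).constr_basis ℝ
    (fun d => (((d i : ℝ) + 1)⁻¹) • monomial (d + Finsupp.single i 1) (1 : ℝ)) d
  simpa [antid, coe_basisMonomials] using this

noncomputable def ev0 : MvPolynomial (Fin 2) ℝ →ₗ[ℝ] MvPolynomial (Fin 2) ℝ :=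
  (aeval fun j : Fin 2 => if j = 0 then (0 : MvPolynomial (Fin 2) ℝ) else X j).toLinearMap

lemma ev0_monomial (d : Fin 2 →₀ ℕ) :
    ev0 (monomial d (1 : ℝ)) = if d 0 = 0 then monomial d (1 : ℝ) else 0 := by
  simp only [ev0, AlgHom.toLinearMap_apply, aeval_monomial, map_one, one_mul]
  rw [Finsupp.prod_fintype d _ (fun i => pow_zero _), Fin.prod_univ_two]
  have h10 : ((1 : Fin 2) = 0) = False := by simp
  simp only [if_pos rfl, h10, if_false, eq_self_iff_true, if_true]
  by_cases h : d 0 = 0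
  · rw [if_pos h, h, pow_zero, one_mul, X_pow_eq_monomial]
    have hd : Finsupp.single (1 : Fin 2) (d 1) = d := by
      ext j
      fin_cases j <;> simp [h, Finsupp.single_apply]
    rw [hd]
  · rw [if_neg h, zero_pow h, zero_mul]

lemma pderiv_antid (i : Fin 2) (q : MvPolynomial (Fin 2) ℝ) :
    pderiv i (antid i q) = q := by
  have key : (pderiv i).toLinearMap.comp (antid i) = LinearMap.id := by
    apply (basisMonomials (Fin 2) ℝ).ext
    intro d
    simp only [LinearMap.comp_apply, coe_basisMonomials, LinearMap.id_apply]
    rw [antid_monomial, _root_.map_smul]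
    simp only [Derivation.coeFn_coe]
    rw [pderiv_monomial, smul_monomial]
    have h1 : d + Finsupp.single i 1 - Finsupp.single i 1 = d := by
      ext j; simp [Finsupp.tsub_apply]
    have h2 : (d + Finsupp.single i 1 : Fin 2 →₀ ℕ) i = d i + 1 := by simp
    rw [h1, h2]
    congr 1
    have hne : ((d i : ℝ) + 1) ≠ 0 := by positivity
    push_cast
    rw [smul_eq_mul]
    field_simp
  calc pderiv i (antid i q) = ((pderiv i).toLinearMap.comp (antid i)) q := rfl
    _ = q := by rw [key]; rfl

lemma monomial_eq_smul (d : Fin 2 →₀ ℕ) (c : ℝ) :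
    (monomial d c : MvPolynomial (Fin 2) ℝ) = c • monomial d (1 : ℝ) := by
  rw [smul_monomial, smul_eq_mul, mul_one]

lemma antid_pderiv (q : MvPolynomial (Fin 2) ℝ) :
    antid 0 (pderiv 0 q) = q - ev0 q := by
  have key : (antid 0).comp (pderiv (0 : Fin 2)).toLinearMap = LinearMap.id - ev0 := by
    apply (basisMonomials (Fin 2) ℝ).ext
    intro d
    simp only [LinearMap.comp_apply, LinearMap.sub_apply, LinearMap.id_apply,
      coe_basisMonomials, Derivation.coeFn_coe]
    rw [pderiv_monomial, ev0_monomial]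
    by_cases h : d 0 = 0
    · rw [if_pos h, h]
      norm_num
    · rw [if_neg h, one_mul, monomial_eq_smul, _root_.map_smul, antid_monomial]
      have hle : Finsupp.single (0 : Fin 2) 1 ≤ d :=
        Finsupp.single_le_iff.mpr (Nat.one_le_iff_ne_zero.mpr h)
      have h1 : d - Finsupp.single 0 1 + Finsupp.single 0 1 = d := tsub_add_cancel_of_le hle
      have h2 : (d - Finsupp.single 0 1 : Fin 2 →₀ ℕ) 0 = d 0 - 1 := by
        simp [Finsupp.tsub_apply]
      rw [h1, h2, sub_zero]
      rw [smul_smul]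
      have : ((d 0 : ℝ)) * (((d 0 - 1 : ℕ) : ℝ) + 1)⁻¹ = 1 := by
        have hcast : ((d 0 - 1 : ℕ) : ℝ) = (d 0 : ℝ) - 1 := by
          push_cast [Nat.cast_sub (Nat.one_le_iff_ne_zero.mpr h)]; ring
        rw [hcast]
        have : (d 0 : ℝ) ≠ 0 := Nat.cast_ne_zero.mpr h
        field_simp
        rw [sub_add_cancel, div_self this]
      rw [this, one_smul]
  calc antid 0 (pderiv 0 q) = ((antid 0).comp (pderiv (0 : Fin 2)).toLinearMap) q := rfl
    _ = q - ev0 q := by rw [key]; rfl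

lemma pderiv0_antid1_ev0 (q : MvPolynomial (Fin 2) ℝ) :
    pderiv 0 (antid 1 (ev0 q)) = 0 := by
  have key : (pderiv (0 : Fin 2)).toLinearMap.comp ((antid 1).comp ev0) = 0 := by
    apply (basisMonomials (Fin 2) ℝ).ext
    intro d
    simp only [LinearMap.comp_apply, coe_basisMonomials, LinearMap.zero_apply,
      Derivation.coeFn_coe]
    rw [ev0_monomial]
    by_cases h : d 0 = 0
    · rw [if_pos h, antid_monomial, Derivation.map_smul, pderiv_monomial]
      have h0 : (d + Finsupp.single 1 1 : Fin 2 →₀ ℕ) 0 = 0 := by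
        simp [h, Finsupp.single_apply]
      rw [h0]
      norm_num
    · rw [if_neg h]
      simp
  calc pderiv 0 (antid 1 (ev0 q))
      = ((pderiv (0 : Fin 2)).toLinearMap.comp ((antid 1).comp ev0)) q := rfl
    _ = 0 := by rw [key]; rfl

lemma antid_monomial' (i : Fin 2) (d : Fin 2 →₀ ℕ) (c : ℝ) :
    antid i (monomial d c) = (((d i : ℝ) + 1)⁻¹) • monomial (d + Finsupp.single i 1) c := by
  rw [monomial_eq_smul, _root_.map_smul, antid_monomial,
    monomial_eq_smul (d + Finsupp.single i 1) c, smul_smul, smul_smul, mul_comm]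

lemma pderiv1_antid0 (q : MvPolynomial (Fin 2) ℝ) :
    pderiv 1 (antid 0 q) = antid 0 (pderiv 1 q) := by
  have key : (pderiv (1 : Fin 2)).toLinearMap.comp (antid 0)
      = (antid 0).comp (pderiv (1 : Fin 2)).toLinearMap := by
    apply (basisMonomials (Fin 2) ℝ).ext
    intro d
    simp only [LinearMap.comp_apply, coe_basisMonomials, Derivation.coeFn_coe]
    rw [antid_monomial]
    rw [Derivation.map_smul]
    simp only [pderiv_monomial, antid_monomial']
    have e1 : (d + Finsupp.single 0 1 : Fin 2 →₀ ℕ) 1 = d 1 := by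
      simp [Finsupp.single_apply]
    have e2 : (d - Finsupp.single 1 1 : Fin 2 →₀ ℕ) 0 = d 0 := by
      simp [Finsupp.tsub_apply, Finsupp.single_apply]
    have e3 : d + Finsupp.single 0 1 - Finsupp.single 1 1
        = d - Finsupp.single 1 1 + Finsupp.single 0 1 := by
      ext j
      fin_cases j <;> simp [Finsupp.tsub_apply, Finsupp.single_apply]
    rw [e1, e2, e3]
  calc pderiv 1 (antid 0 q) = ((pderiv (1 : Fin 2)).toLinearMap.comp (antid 0)) q := rfl
    _ = antid 0 (pderiv 1 q) := by rw [key]; rfl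

lemma pderiv_comm' (p : MvPolynomial (Fin 2) ℝ) :
    pderiv (0 : Fin 2) (pderiv 1 p) = pderiv 1 (pderiv 0 p) := by
  have key : ((pderiv (0 : Fin 2)).toLinearMap : MvPolynomial (Fin 2) ℝ →ₗ[ℝ] MvPolynomial (Fin 2) ℝ).comp
        (pderiv (1 : Fin 2)).toLinearMap
      = ((pderiv (1 : Fin 2)).toLinearMap : MvPolynomial (Fin 2) ℝ →ₗ[ℝ] MvPolynomial (Fin 2) ℝ).comp
        (pderiv (0 : Fin 2)).toLinearMap := by
    apply (basisMonomials (Fin 2) ℝ).ext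
    intro d
    simp only [LinearMap.comp_apply, coe_basisMonomials, Derivation.coeFn_coe]
    simp only [pderiv_monomial]
    have e1 : (d - Finsupp.single 1 1 : Fin 2 →₀ ℕ) 0 = d 0 := by
      simp [Finsupp.tsub_apply, Finsupp.single_apply]
    have e2 : (d - Finsupp.single 0 1 : Fin 2 →₀ ℕ) 1 = d 1 := by
      simp [Finsupp.tsub_apply, Finsupp.single_apply]
    have e3 : d - Finsupp.single 1 1 - Finsupp.single 0 1
        = d - Finsupp.single 0 1 - Finsupp.single 1 1 := by
      ext j
      fin_cases j <;> simp [Finsupp.tsub_apply, Finsupp.single_apply]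
    rw [e1, e2, e3]
    congr 1
    ring
  calc pderiv (0 : Fin 2) (pderiv 1 p)
      = ((pderiv (0 : Fin 2)).toLinearMap.comp (pderiv (1 : Fin 2)).toLinearMap) p := rfl
    _ = _ := by rw [key]; rfl

lemma totalDegree_linearMap_le
    (L : MvPolynomial (Fin 2) ℝ →ₗ[ℝ] MvPolynomial (Fin 2) ℝ) (b : ℕ)
    (h : ∀ (d : Fin 2 →₀ ℕ) (c : ℝ),
      (L (monomial d c)).totalDegree ≤ (d.sum fun _ e => e) + b)
    (q : MvPolynomial (Fin 2) ℝ) : (L q).totalDegree ≤ q.totalDegree + b := by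
  conv_lhs => rw [q.as_sum]
  rw [map_sum]
  apply totalDegree_finsetSum_le
  intro d hd
  exact (h d _).trans (Nat.add_le_add_right (le_totalDegree hd) b)

lemma sum_add_single (d : Fin 2 →₀ ℕ) (i : Fin 2) :
    ((d + Finsupp.single i 1).sum fun _ e => e) = (d.sum fun _ e => e) + 1 := by
  rw [Finsupp.sum_add_index' (fun _ => rfl) (fun _ _ _ => rfl),
    Finsupp.sum_single_index rfl]

lemma totalDegree_antid_le (i : Fin 2) (q : MvPolynomial (Fin 2) ℝ) :
    (antid i q).totalDegree ≤ q.totalDegree + 1 := by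
  refine totalDegree_linearMap_le _ 1 (fun d c => ?_) q
  rw [antid_monomial', smul_monomial]
  refine (totalDegree_monomial_le _ _).trans ?_
  exact le_of_eq (sum_add_single d i)

lemma totalDegree_ev0_le (q : MvPolynomial (Fin 2) ℝ) :
    (ev0 q).totalDegree ≤ q.totalDegree := by
  have h := totalDegree_linearMap_le ev0 0 (fun d c => ?_) q
  · simpa using h
  · rw [monomial_eq_smul, _root_.map_smul, ev0_monomial]
    by_cases h : d 0 = 0
    · rw [if_pos h, smul_monomial]
      simp only [smul_eq_mul, mul_one, add_zero]
      exact totalDegree_monomial_le d c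
    · rw [if_neg h, smul_zero]
      simp

lemma totalDegree_pderiv_le' (i : Fin 2) (q : MvPolynomial (Fin 2) ℝ) (m : ℕ)
    (hq : q.totalDegree ≤ m + 1) : (pderiv i q).totalDegree ≤ m := by
  conv_lhs => rw [q.as_sum]
  rw [map_sum]
  apply totalDegree_finsetSum_le
  intro d hd
  rw [pderiv_monomial]
  by_cases h : d i = 0
  · rw [h]
    norm_num
  · refine (totalDegree_monomial_le _ _).trans ?_
    have hle : Finsupp.single i 1 ≤ d :=
      Finsupp.single_le_iff.mpr (Nat.one_le_iff_ne_zero.mpr h)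
    have h2 : (d.sum fun _ e => e) = ((d - Finsupp.single i 1).sum fun _ e => e) + 1 := by
      conv_lhs => rw [← tsub_add_cancel_of_le hle]
      exact sum_add_single _ i
    have hd' : (d.sum fun _ e => e) ≤ m + 1 := le_trans (le_totalDegree hd) hq
    have : ((d - Finsupp.single i 1).sum fun _ => id)
        = ((d - Finsupp.single i 1).sum fun _ e => e) := rfl
    omega

lemma pderiv_eq_zero_of_totalDegree_eq_zero (i : Fin 2) (q : MvPolynomial (Fin 2) ℝ)
    (hq : q.totalDegree = 0) : pderiv i q = 0 := by
  conv_lhs => rw [q.as_sum]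
  rw [map_sum]
  refine Finset.sum_eq_zero fun d hd => ?_
  rw [pderiv_monomial]
  have := (totalDegree_eq_zero_iff (Fin 2) q).mp hq d hd i
  rw [this]
  norm_num

noncomputable def gradLM : MvPolynomial (Fin 2) ℝ →ₗ[ℝ] (Fin 2 → MvPolynomial (Fin 2) ℝ) :=
  LinearMap.pi fun i => (pderiv i).toLinearMap

@[simp] lemma gradLM_apply (p : MvPolynomial (Fin 2) ℝ) (i : Fin 2) :
    gradLM p i = pderiv i p := rfl

lemma poincare {v : Fin 2 → MvPolynomial (Fin 2) ℝ} {k : ℕ}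
    (hdeg : ∀ i, (v i).totalDegree ≤ k)
    (hrot : pderiv 0 (v 1) = pderiv 1 (v 0)) :
    ∃ p : MvPolynomial (Fin 2) ℝ, p.totalDegree ≤ k + 1 ∧ gradLM p = v := by
  refine ⟨antid 0 (v 0) + antid 1 (ev0 (v 1)), ?_, ?_⟩
  · refine (totalDegree_add _ _).trans (max_le ?_ ?_)
    · exact (totalDegree_antid_le _ _).trans (by have := hdeg 0; omega)
    · exact (totalDegree_antid_le _ _).trans
        (by have := totalDegree_ev0_le (v 1); have := hdeg 1; omega)
  · funext i
    fin_cases i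
    · show pderiv 0 _ = v 0
      rw [map_add, pderiv_antid, pderiv0_antid1_ev0, add_zero]
    · show pderiv 1 _ = v 1
      rw [map_add, pderiv_antid 1, pderiv1_antid0, ← hrot, antid_pderiv, sub_add_cancel]



lemma sum_eq_two (d : Fin 2 →₀ ℕ) : (d.sum fun _ e => e) = d 0 + d 1 := by
  rw [Finsupp.sum_fintype _ _ (fun _ => rfl), Fin.sum_univ_two]

noncomputable def e1 (n : ℕ) :
    {d : Fin 2 →₀ ℕ // (d.sum fun _ e => e) ≤ n} ≃ {ab : ℕ × ℕ // ab.1 + ab.2 ≤ n} where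
  toFun d := ⟨(d.1 0, d.1 1), by rw [← sum_eq_two]; exact d.2⟩
  invFun ab := ⟨Finsupp.single 0 ab.1.1 + Finsupp.single 1 ab.1.2, by
    rw [sum_eq_two]
    simpa [Finsupp.single_apply] using ab.2⟩
  left_inv d := by
    apply Subtype.ext
    ext j
    fin_cases j <;> simp [Finsupp.single_apply]
  right_inv ab := by
    apply Subtype.ext
    simp [Finsupp.single_apply]

def e2 (n : ℕ) : {ab : ℕ × ℕ // ab.1 + ab.2 ≤ n} ≃ (Σ a : Fin (n + 1), Fin (n + 1 - a)) where
  toFun := fun ⟨(a, b), h⟩ => ⟨⟨a, by omega⟩, ⟨b, show b < n + 1 - a by omega⟩⟩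
  invFun x := ⟨(x.1.1, x.2.1), by have h1 := x.1.2; have h2 := x.2.2; omega⟩
  left_inv := fun ⟨(a, b), h⟩ => rfl
  right_inv := fun ⟨⟨a, ha⟩, ⟨b, hb⟩⟩ => rfl

lemma finrank_P (n : ℕ) :
    Module.finrank ℝ (restrictTotalDegree (Fin 2) ℝ n) = (n + 1) * (n + 2) / 2 := by
  classical
  letI : Fintype {d : Fin 2 →₀ ℕ // (d.sum fun _ e => e) ≤ n} :=
    Fintype.ofEquiv _ ((e1 n).trans (e2 n)).symm
  have b : Module.Basis {d : Fin 2 →₀ ℕ // (d.sum fun _ e => e) ≤ n} ℝ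
      (restrictTotalDegree (Fin 2) ℝ n) := basisRestrictSupport ℝ _
  rw [Module.finrank_eq_card_basis b, Fintype.card_congr ((e1 n).trans (e2 n)),
    Fintype.card_sigma]
  simp only [Fintype.card_fin]
  rw [Fin.sum_univ_eq_sum_range (fun a => n + 1 - a) (n + 1)]
  have h1 : ∑ j ∈ Finset.range (n + 1), (n + 1 - j) = ∑ j ∈ Finset.range (n + 1), (j + 1) := by
    rw [← Finset.sum_range_reflect]
    refine Finset.sum_congr rfl fun j hj => ?_
    simp only [Finset.mem_range] at hj
    omega
  have h2 : ∑ j ∈ Finset.range (n + 1), (j + 1) = ∑ j ∈ Finset.range (n + 2), j := by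
    rw [Finset.sum_range_succ' (fun j => j) (n + 1)]
    simp
  have h3 : (∑ j ∈ Finset.range (n + 2), j) * 2 = (n + 1) * (n + 2) := by
    rw [Finset.sum_range_id_mul_two]
    have he : n + 2 - 1 = n + 1 := rfl
    rw [he]
    ring
  rw [h1, h2, ← h3, Nat.mul_div_cancel _ (by norm_num)]


noncomputable def pvecEquiv (k : ℕ) :
    ↥(Pvec k) ≃ₗ[ℝ] (Fin 2 → ↥(restrictTotalDegree (Fin 2) ℝ k)) where
  toFun v := fun i => ⟨v.1 i, (Submodule.mem_pi.mp v.2) i (Set.mem_univ i)⟩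
  map_add' _ _ := rfl
  map_smul' _ _ := rfl
  invFun f := ⟨fun i => (f i).1, Submodule.mem_pi.mpr fun i _ => (f i).2⟩
  left_inv _ := rfl
  right_inv _ := rfl

instance (k : ℕ) : Module.Finite ℝ ↥(Pvec k) := Module.Finite.equiv (pvecEquiv k).symm

end RotAux

open RotAux

/-- For a bounded polygon `E` (with nonempty interior), the scalar rot restricted to the
`L²(E)`-orthogonal complement `G_k^⊥` of `G_k = grad(P_{k+1})` in `(P_k)²` is a linear
isomorphism onto `P_{k-1}`; in particular `dim G_k^⊥ = dim P_{k-1} = k(k+1)/2`. -/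
theorem rot_iso_on_Gperp (k : ℕ) (E : Set (Fin 2 → ℝ)) (hEm : MeasurableSet E)
    (hEb : Bornology.IsBounded E) (hEi : (interior E).Nonempty) :
    (∀ v ∈ Gperp E hEb k, ∀ w ∈ Gperp E hEb k, rotLM v = rotLM w → v = w) ∧
    (∀ v ∈ Gperp E hEb k, degLE ((k : ℤ) - 1) (rotLM v)) ∧
    (∀ q : MvPolynomial (Fin 2) ℝ, degLE ((k : ℤ) - 1) q →
      ∃ v ∈ Gperp E hEb k, rotLM v = q) ∧
    Module.finrank ℝ (Gperp E hEb k) = k * (k + 1) / 2 := by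
  classical
  have hmem : ∀ v : Fin 2 → MvPolynomial (Fin 2) ℝ, v ∈ Gperp E hEb k ↔
      (v ∈ Pvec k ∧ ∀ p : MvPolynomial (Fin 2) ℝ, p.totalDegree ≤ k + 1 →
        ipL E hEb (fun i => pderiv i p) v = 0) := by
    intro v
    simp only [Gperp, Submodule.mem_inf, Submodule.mem_iInf, LinearMap.mem_ker,
      Set.mem_setOf_eq]
  have hPvec : ∀ v : Fin 2 → MvPolynomial (Fin 2) ℝ,
      v ∈ Pvec k ↔ ∀ i, (v i).totalDegree ≤ k := by
    intro v
    rw [Pvec, Submodule.mem_pi]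
    constructor
    · intro h i; exact (mem_restrictTotalDegree _ _ _).mp (h i (Set.mem_univ i))
    · intro h i _; exact (mem_restrictTotalDegree _ _ _).mpr (h i)
  have hrotapply : ∀ v : Fin 2 → MvPolynomial (Fin 2) ℝ,
      rotLM v = pderiv 0 (v 1) - pderiv 1 (v 0) := fun v => rfl
  -- Part 1 : injectivity
  have hinj : ∀ v ∈ Gperp E hEb k, ∀ w ∈ Gperp E hEb k, rotLM v = rotLM w → v = w := by
    intro v hv w hw hr
    have hu : v - w ∈ Gperp E hEb k := Submodule.sub_mem _ hv hw
    rw [hmem] at hu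
    obtain ⟨huP, huO⟩ := hu
    have hdeg : ∀ i, ((v - w) i).totalDegree ≤ k := (hPvec _).mp huP
    have hrot0 : pderiv 0 ((v - w) 1) = pderiv 1 ((v - w) 0) := by
      have h0 : rotLM (v - w) = 0 := by rw [map_sub, hr, sub_self]
      rw [hrotapply, sub_eq_zero] at h0
      exact h0
    obtain ⟨p, hp, hgrad⟩ := RotAux.poincare hdeg hrot0
    have h0 := huO p hp
    have hfe : (fun i => pderiv i p) = v - w := by
      funext i; exact congrFun hgrad i
    rw [hfe] at h0
    exact sub_eq_zero.mp (RotAux.ipL_self_eq_zero hEm hEb hEi h0)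
  -- Part 2 : degree of rot
  have hdegpart : ∀ v ∈ Gperp E hEb k, degLE ((k : ℤ) - 1) (rotLM v) := by
    intro v hv
    have hdeg : ∀ i, (v i).totalDegree ≤ k := (hPvec _).mp ((hmem v).mp hv).1
    rcases Nat.eq_zero_or_eq_succ_pred k with hk | hk
    · have h1 : pderiv (0 : Fin 2) (v 1) = 0 :=
        RotAux.pderiv_eq_zero_of_totalDegree_eq_zero _ _
          (Nat.le_zero.mp (hk ▸ hdeg 1))
      have h0 : pderiv (1 : Fin 2) (v 0) = 0 :=
        RotAux.pderiv_eq_zero_of_totalDegree_eq_zero _ _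
          (Nat.le_zero.mp (hk ▸ hdeg 0))
      have hz : rotLM v = 0 := by rw [hrotapply, h1, h0, sub_zero]
      simp only [degLE, hk]
      norm_num [hz]
    · set m := k - 1 with hm
      have hk' : k = m + 1 := hk
      have hb : (rotLM v).totalDegree ≤ m := by
        rw [hrotapply]
        refine (totalDegree_sub _ _).trans (max_le ?_ ?_)
        · exact RotAux.totalDegree_pderiv_le' _ _ m (by rw [← hk']; exact hdeg 1)
        · exact RotAux.totalDegree_pderiv_le' _ _ m (by rw [← hk']; exact hdeg 0)
      simp only [degLE]
      rw [if_pos (by omega : (0 : ℤ) ≤ (k : ℤ) - 1)]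
      have ht : ((k : ℤ) - 1).toNat = m := by omega
      rw [ht]
      exact hb
  -- inner-product structure on Pvec k
  letI icore : InnerProductSpace.Core ℝ ↥(Pvec k) :=
    { inner := fun x y => ipL E hEb (y : Fin 2 → MvPolynomial (Fin 2) ℝ)
        (x : Fin 2 → MvPolynomial (Fin 2) ℝ)
      conj_inner_symm := fun x y => by
        simp only [starRingEnd_apply, star_trivial]
        exact RotAux.ipL_comm E hEb _ _
      re_inner_nonneg := fun x => by
        simpa using RotAux.ipL_self_nonneg hEm hEb
          (x : Fin 2 → MvPolynomial (Fin 2) ℝ)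
      definite := fun x hx => Subtype.ext (RotAux.ipL_self_eq_zero hEm hEb hEi hx)
      add_left := fun x y z =>
        (ipL E hEb (z : Fin 2 → MvPolynomial (Fin 2) ℝ)).map_add
          (x : Fin 2 → MvPolynomial (Fin 2) ℝ) (y : Fin 2 → MvPolynomial (Fin 2) ℝ)
      smul_left := fun x y r => by
        simp only [starRingEnd_apply, star_trivial]
        simpa using (ipL E hEb (y : Fin 2 → MvPolynomial (Fin 2) ℝ)).map_smul r
          (x : Fin 2 → MvPolynomial (Fin 2) ℝ) }
  letI : NormedAddCommGroup ↥(Pvec k) := InnerProductSpace.Core.toNormedAddCommGroup (𝕜 := ℝ)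
  letI : InnerProductSpace ℝ ↥(Pvec k) := InnerProductSpace.ofCore icore.toCore
  set G : Submodule ℝ (Fin 2 → MvPolynomial (Fin 2) ℝ) :=
    Submodule.map RotAux.gradLM (restrictTotalDegree (Fin 2) ℝ (k + 1)) with hG
  have hGsub : G ≤ Pvec k := by
    rintro _ ⟨p, hp, rfl⟩
    refine (hPvec _).mpr fun i => ?_
    exact RotAux.totalDegree_pderiv_le' i p k ((mem_restrictTotalDegree _ _ _).mp hp)
  set GW : Submodule ℝ ↥(Pvec k) := G.comap (Pvec k).subtype with hGWdef
  -- Part 3 : surjectivity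
  have hsurj : ∀ q : MvPolynomial (Fin 2) ℝ, degLE ((k : ℤ) - 1) q →
      ∃ v ∈ Gperp E hEb k, rotLM v = q := by
    intro q hq
    by_cases hk : k = 0
    · have hq0 : q = 0 := by
        subst hk
        simpa [degLE] using hq
      exact ⟨0, Submodule.zero_mem _, by rw [hq0, map_zero]⟩
    · have hk1 : 1 ≤ k := Nat.one_le_iff_ne_zero.mpr hk
      have hqd : q.totalDegree ≤ k - 1 := by
        simp only [degLE] at hq
        rw [if_pos (by omega : (0 : ℤ) ≤ (k : ℤ) - 1)] at hq
        have ht : ((k : ℤ) - 1).toNat = k - 1 := by omega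
        rwa [ht] at hq
      set w : Fin 2 → MvPolynomial (Fin 2) ℝ :=
        fun i => if i = 1 then RotAux.antid 0 q else 0 with hwdef
      have hw0 : w 0 = 0 := by simp [hwdef]
      have hw1 : w 1 = RotAux.antid 0 q := by simp [hwdef]
      have hwW : w ∈ Pvec k := by
        refine (hPvec w).mpr fun i => ?_
        by_cases hi : i = 1
        · subst hi
          rw [hw1]
          exact (RotAux.totalDegree_antid_le 0 q).trans (by omega)
        · have hwi : w i = 0 := by simp [hwdef, hi]
          rw [hwi]
          simp
      obtain ⟨g, hg, z, hz, hdecomp⟩ :=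
        GW.exists_add_mem_mem_orthogonal (⟨w, hwW⟩ : ↥(Pvec k))
      refine ⟨(z : Fin 2 → MvPolynomial (Fin 2) ℝ), ?_, ?_⟩
      · rw [hmem]
        refine ⟨z.2, ?_⟩
        intro p hp
        have hgp : RotAux.gradLM p ∈ G :=
          ⟨p, (mem_restrictTotalDegree _ _ _).mpr hp, rfl⟩
        have hgpW : RotAux.gradLM p ∈ Pvec k := hGsub hgp
        have hu : (⟨RotAux.gradLM p, hgpW⟩ : ↥(Pvec k)) ∈ GW := by
          rw [hGWdef, Submodule.mem_comap]
          exact hgp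
        have horth := (Submodule.mem_orthogonal GW (z : ↥(Pvec k))).mp hz _ hu
        rw [RotAux.ipL_comm]
        exact horth
      · have hcoe : w = (g : Fin 2 → MvPolynomial (Fin 2) ℝ)
            + (z : Fin 2 → MvPolynomial (Fin 2) ℝ) := by
          have := congrArg (Subtype.val) hdecomp
          exact this
        obtain ⟨p, hp, hgp⟩ := hg
        have hgp' : RotAux.gradLM p = (g : Fin 2 → MvPolynomial (Fin 2) ℝ) := hgp
        have hrotg : rotLM (g : Fin 2 → MvPolynomial (Fin 2) ℝ) = 0 := by
          rw [← hgp', hrotapply]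
          rw [show RotAux.gradLM p 1 = pderiv 1 p from rfl,
            show RotAux.gradLM p 0 = pderiv 0 p from rfl,
            RotAux.pderiv_comm', sub_self]
        have hrotw : rotLM w = q := by
          rw [hrotapply, hw1, hw0, RotAux.pderiv_antid, map_zero, sub_zero]
        have : rotLM (z : Fin 2 → MvPolynomial (Fin 2) ℝ)
            = rotLM w - rotLM (g : Fin 2 → MvPolynomial (Fin 2) ℝ) := by
          rw [hcoe, map_add]
          ring
        rw [this, hrotw, hrotg, sub_zero]
  refine ⟨hinj, hdegpart, hsurj, ?_⟩
  -- Part 4 : dimension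
  by_cases hk : k = 0
  · subst hk
    have hbot : Gperp E hEb 0 = ⊥ := by
      rw [Submodule.eq_bot_iff]
      intro v hv
      refine hinj v hv 0 (Submodule.zero_mem _) ?_
      have h := hdegpart v hv
      simp only [degLE] at h
      rw [if_neg (by norm_num)] at h
      rw [h, map_zero]
    rw [hbot, finrank_bot]
  · obtain ⟨m, rfl⟩ : ∃ m, k = m + 1 := ⟨k - 1, by omega⟩
    have hmap : ∀ v ∈ Gperp E hEb (m + 1),
        rotLM v ∈ restrictTotalDegree (Fin 2) ℝ m := by
      intro v hv
      have h := hdegpart v hv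
      simp only [degLE] at h
      rw [if_pos (by omega : (0 : ℤ) ≤ ((m + 1 : ℕ) : ℤ) - 1)] at h
      have ht : (((m + 1 : ℕ) : ℤ) - 1).toNat = m := by omega
      rw [ht] at h
      exact (mem_restrictTotalDegree _ _ _).mpr h
    have hbij : Function.Bijective (rotLM.restrict hmap) := by
      constructor
      · intro x y hxy
        exact Subtype.ext (hinj x.1 x.2 y.1 y.2 (congrArg Subtype.val hxy))
      · rintro ⟨q, hqmem⟩
        have hqd : degLE (((m + 1 : ℕ) : ℤ) - 1) q := by
          simp only [degLE]
          rw [if_pos (by omega : (0 : ℤ) ≤ ((m + 1 : ℕ) : ℤ) - 1)]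
          have ht : (((m + 1 : ℕ) : ℤ) - 1).toNat = m := by omega
          rw [ht]
          exact (mem_restrictTotalDegree _ _ _).mp hqmem
        obtain ⟨v, hv, hrv⟩ := hsurj q hqd
        exact ⟨⟨v, hv⟩, Subtype.ext hrv⟩
    rw [(LinearEquiv.ofBijective (rotLM.restrict hmap) hbij).finrank_eq,
      RotAux.finrank_P m]
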